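/- For every real x, the momentum function p(λ) = −i·Log(−i·tanh λ) satisfies p(x + iπ/4) = −π/2 + 2·arctan(e^{−2x}); in particular p is real-valued on the line ℝ + iπ/4. -/

import Mathlib

open Complex Real

/-- The momentum function of the XX chain: `p(λ) = -i Log(-i tanh λ)`,
with `Log` the principal branch of the complex logarithm. -/
noncomputable def momentum (l : ℂ) : ℂ := -Complex.I * Complex.log (-Complex.I * Complex.tanh l)

/-- For real `x`, `p(x + iπ/4) = -π/2 + 2 arctan(e^{-2x})`; in particular `p` is
real-valued on the line `ℝ + iπ/4`. -/
theorem momentum_on_upper_line (x : ℝ) :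
    momentum (x + Complex.I * (π / 4)) =
      ((-(π / 2) + 2 * Real.arctan (Real.exp (-2 * x)) : ℝ) : ℂ) ∧
    (momentum (x + Complex.I * (π / 4))).im = 0 := by
  set l : ℂ := (x : ℂ) + Complex.I * (π / 4) with hl
  set v : ℝ := Real.exp (-2 * x) with hv
  set u : ℝ := Real.exp (2 * x) with hu
  have hv0 : 0 < v := Real.exp_pos _
  have huv : u * v = 1 := by
    rw [hu, hv, ← Real.exp_add]; norm_num
  set φ : ℝ := Real.arctan v with hφ
  set θ : ℝ := -(π / 2) + 2 * φ with hθ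
  have hφ1 : 0 < φ := by have h := Real.arctan_strictMono hv0; rwa [Real.arctan_zero] at h
  have hφ2 : φ < π / 2 := Real.arctan_lt_pi_div_two v
  -- exp(2l) = u * I
  have hE2 : Complex.exp (2 * l) = (u : ℂ) * Complex.I := by
    have : (2 : ℂ) * l = (↑(2 * x) : ℂ) + (↑(π / 2) : ℝ) * Complex.I := by
      rw [hl]; push_cast; ring
    rw [this, Complex.exp_add, ← Complex.ofReal_exp, Complex.exp_mul_I, ← Complex.ofReal_cos,
      ← Complex.ofReal_sin, Real.cos_pi_div_two, Real.sin_pi_div_two, hu]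
    push_cast
    ring
  -- tanh l = (u I - 1)/(u I + 1)
  have hden : (u : ℂ) * Complex.I + 1 ≠ 0 := by
    intro h
    have := congrArg Complex.re h
    simp at this
  have hE : Complex.exp l ≠ 0 := Complex.exp_ne_zero _
  have hll : Complex.exp l * Complex.exp l = (u : ℂ) * Complex.I := by
    rw [← Complex.exp_add, ← hE2]; congr 1; ring
  have hinv : Complex.exp (-l) * Complex.exp l = 1 := by
    rw [← Complex.exp_add]; simp
  have h2E : (2 : ℂ) * Complex.exp l ≠ 0 := by simp [hE]
  have hcosh : Complex.cosh l = ((u : ℂ) * Complex.I + 1) / (2 * Complex.exp l) := by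
    rw [eq_div_iff h2E, show Complex.cosh l = (Complex.exp l + Complex.exp (-l))/2 from rfl]
    linear_combination hll + hinv
  have hsinh : Complex.sinh l = ((u : ℂ) * Complex.I - 1) / (2 * Complex.exp l) := by
    rw [eq_div_iff h2E, show Complex.sinh l = (Complex.exp l - Complex.exp (-l))/2 from rfl]
    linear_combination hll - hinv
  have hcosh0 : Complex.cosh l ≠ 0 := by
    rw [hcosh]
    exact div_ne_zero hden (by simp [hE])
  have htanh : -Complex.I * Complex.tanh l = ((u : ℂ) + Complex.I) / ((u : ℂ) * Complex.I + 1) := by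
    rw [Complex.tanh_eq_sinh_div_cosh, hsinh, hcosh]
    rw [div_div_div_cancel_right₀ h2E, ← mul_div_assoc]
    congr 1
    linear_combination (-(u : ℂ)) * Complex.I_sq
  -- trig values
  have hsq : Real.sqrt (1 + v ^ 2) ^ 2 = 1 + v ^ 2 :=
    Real.sq_sqrt (by positivity)
  have hcosθ : Real.cos θ = 2 * v / (1 + v ^ 2) := by
    have : θ = -(π / 2 - 2 * φ) := by rw [hθ]; ring
    rw [this, Real.cos_neg, Real.cos_pi_div_two_sub, Real.sin_two_mul,
      Real.sin_arctan, Real.cos_arctan]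
    field_simp
    exact hsq.symm
  have hsinθ : Real.sin θ = (v ^ 2 - 1) / (1 + v ^ 2) := by
    have : θ = -(π / 2 - 2 * φ) := by rw [hθ]; ring
    rw [this, Real.sin_neg, Real.sin_pi_div_two_sub, Real.cos_two_mul,
      Real.cos_arctan]
    field_simp
    nlinarith [hsq, Real.sqrt_nonneg (1 + v ^ 2)]
  -- main identity
  have hmain : -Complex.I * Complex.tanh l = Complex.exp ((θ : ℂ) * Complex.I) := by
    rw [htanh, Complex.exp_mul_I, div_eq_iff hden, ← Complex.ofReal_cos, ← Complex.ofReal_sin,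
      hcosθ, hsinθ]
    have huvC : (u : ℂ) * (v : ℂ) = 1 := by
      rw [← Complex.ofReal_mul, huv]; norm_num
    have h1v : ((1 : ℂ) + (v : ℂ) ^ 2) ≠ 0 := by
      have h0 : ((1 + v ^ 2 : ℝ) : ℂ) ≠ 0 := by
        exact_mod_cast (by positivity : (1 + v ^ 2 : ℝ) ≠ 0)
      push_cast at h0
      exact h0
    push_cast
    field_simp
    ring_nf
    simp only [Complex.I_sq]
    linear_combination (2 * (v : ℂ) - 2 * Complex.I) * huvC
  have hlog : Complex.log (-Complex.I * Complex.tanh l) = (θ : ℂ) * Complex.I := by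
    rw [hmain]
    apply Complex.log_exp
    · have h1 : ((θ : ℂ) * Complex.I).im = θ := by simp
      rw [h1, hθ]
      linarith [Real.pi_pos, hφ1, hφ2]
    · have h1 : ((θ : ℂ) * Complex.I).im = θ := by simp
      rw [h1, hθ]
      linarith [Real.pi_pos, hφ1, hφ2]
  have hfin : momentum l = (θ : ℂ) := by
    rw [momentum, hlog]
    linear_combination -(θ : ℂ) * Complex.I_sq
  refine ⟨hfin, by rw [hfin]; simp⟩
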